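/- Let U be a finite set with |U| = n, let g : Finset U → ℝ be submodular, and for 0 ≤ i ≤ n define g_i := (1 / C(n,i)) · ∑_{T ⊆ U, |T| = i} g(T), the average of g over all i-element subsets of U. Then for every integer i with 2 ≤ i ≤ n, g_i + g_{i−2} ≤ 2 · g_{i−1}. -/

import Mathlib

open Finset

private lemma keyA {U : Type*} [Fintype U] [DecidableEq U] (k : ℕ) (f : Finset U → ℝ) :
    ∑ S ∈ (univ : Finset U).powersetCard (k+1), ∑ x ∈ S, f (S.erase x)
    = ((Fintype.card U - k : ℕ) : ℝ) * ∑ A ∈ (univ : Finset U).powersetCard k, f A := by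
  have h1 : ∑ S ∈ (univ : Finset U).powersetCard (k+1), ∑ x ∈ S, f (S.erase x)
      = ∑ A ∈ (univ : Finset U).powersetCard k, ∑ _x ∈ Aᶜ, f A := by
    rw [Finset.sum_sigma', Finset.sum_sigma']
    refine Finset.sum_nbij' (fun p => ⟨p.1.erase p.2, p.2⟩) (fun p => ⟨insert p.2 p.1, p.2⟩) ?_ ?_ ?_ ?_ ?_
    · rintro ⟨S, x⟩ hp
      simp only [Finset.mem_sigma, Finset.mem_powersetCard_univ] at *
      obtain ⟨hS, hx⟩ := hp
      exact ⟨by rw [Finset.card_erase_of_mem hx, hS]; rfl, by simp⟩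
    · rintro ⟨A, x⟩ hp
      simp only [Finset.mem_sigma, Finset.mem_powersetCard_univ, Finset.mem_compl] at *
      obtain ⟨hA, hx⟩ := hp
      exact ⟨by rw [Finset.card_insert_of_notMem hx, hA], Finset.mem_insert_self _ _⟩
    · rintro ⟨S, x⟩ hp
      simp only [Finset.mem_sigma] at hp
      simp [Finset.insert_erase hp.2]
    · rintro ⟨A, x⟩ hp
      simp only [Finset.mem_sigma, Finset.mem_compl] at hp
      simp [Finset.erase_insert hp.2]
    · rintro ⟨S, x⟩ hp; rfl
  rw [h1, Finset.mul_sum]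
  refine Finset.sum_congr rfl (fun A hA => ?_)
  rw [Finset.sum_const, Finset.card_compl, (Finset.mem_powersetCard_univ.mp hA), nsmul_eq_mul]

private lemma pairSum {U : Type*} [DecidableEq U] (S : Finset U) (h : U → ℝ) :
    ∑ x ∈ S, ∑ y ∈ S.erase x, h y = ((S.card : ℝ) - 1) * ∑ y ∈ S, h y := by
  rw [Finset.sum_congr rfl (fun x hx => Finset.sum_erase_eq_sub hx)]
  rw [Finset.sum_sub_distrib, Finset.sum_const, nsmul_eq_mul]
  ring

/-- For a submodular `g` on a ground set of size `n`, the averages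
`g_i` of `g` over all `i`-element subsets satisfy
`g_i + g_{i−2} ≤ 2 g_{i−1}` for `2 ≤ i ≤ n`. -/
theorem avg_submodular_concave
    {U : Type*} [Fintype U] [DecidableEq U]
    (g : Finset U → ℝ)
    (hsub : ∀ A B : Finset U, g (A ∪ B) + g (A ∩ B) ≤ g A + g B)
    (n : ℕ) (hcard : Fintype.card U = n)
    (gavg : ℕ → ℝ)
    (hgavg : ∀ i : ℕ, gavg i =
      (1 / (n.choose i : ℝ)) * ∑ T ∈ (Finset.univ : Finset U).powersetCard i, g T)
    (i : ℕ) (h2 : 2 ≤ i) (hin : i ≤ n) :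
    gavg i + gavg (i - 2) ≤ 2 * gavg (i - 1) := by
  obtain ⟨j, rfl⟩ : ∃ j, i = j + 2 := ⟨i - 2, by omega⟩
  obtain ⟨m, rfl⟩ : ∃ m, n = j + m + 2 := ⟨n - j - 2, by omega⟩
  set n := j + m + 2 with hn
  set Sk : ℕ → ℝ := fun k => ∑ T ∈ (univ : Finset U).powersetCard k, g T with hSk
  -- the main combinatorial inequality
  have main : ((j:ℝ)+2)*((j:ℝ)+1) * Sk (j+2) + ((m:ℝ)+2)*((m:ℝ)+1) * Sk j
      ≤ 2*(((j:ℝ)+1)*((m:ℝ)+1)) * Sk (j+1) := by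
    have step : ∑ S ∈ (univ : Finset U).powersetCard (j+2),
          ∑ x ∈ S, ∑ y ∈ S.erase x, (g S + g ((S.erase x).erase y))
        ≤ ∑ S ∈ (univ : Finset U).powersetCard (j+2),
          ∑ x ∈ S, ∑ y ∈ S.erase x, (g (S.erase x) + g (S.erase y)) := by
      refine Finset.sum_le_sum (fun S hS => Finset.sum_le_sum (fun x hx =>
        Finset.sum_le_sum (fun y hy => ?_)))
      have hxy : y ≠ x := (Finset.mem_erase.mp hy).1
      have hyS : y ∈ S := (Finset.mem_erase.mp hy).2
      have hU : (S.erase x) ∪ (S.erase y) = S := by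
        ext a
        simp only [Finset.mem_union, Finset.mem_erase]
        constructor
        · rintro (⟨_, h⟩ | ⟨_, h⟩) <;> exact h
        · intro ha
          by_cases hax : a = x
          · exact Or.inr ⟨by rw [hax]; exact fun h => hxy h.symm, ha⟩
          · exact Or.inl ⟨hax, ha⟩
      have hI : (S.erase x) ∩ (S.erase y) = (S.erase x).erase y := by
        ext a
        simp only [Finset.mem_inter, Finset.mem_erase]
        tauto
      have := hsub (S.erase x) (S.erase y)
      rw [hU, hI] at this
      exact this
    -- compute the four pieces
    have cardS : ∀ S ∈ (univ : Finset U).powersetCard (j+2), S.card = j + 2 :=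
      fun S hS => Finset.mem_powersetCard_univ.mp hS
    have hcardU : Fintype.card U = j + m + 2 := hcard
    -- T1
    have T1 : ∑ S ∈ (univ : Finset U).powersetCard (j+2),
        ∑ x ∈ S, ∑ y ∈ S.erase x, g S = ((j:ℝ)+2)*((j:ℝ)+1) * Sk (j+2) := by
      rw [hSk, Finset.mul_sum]
      refine Finset.sum_congr rfl (fun S hS => ?_)
      have hc := cardS S hS
      rw [Finset.sum_congr rfl (fun x hx => by
        rw [Finset.sum_const, Finset.card_erase_of_mem hx, hc])]
      rw [Finset.sum_const, hc]
      push_cast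
      ring
    -- T2
    have T2 : ∑ S ∈ (univ : Finset U).powersetCard (j+2),
        ∑ x ∈ S, ∑ y ∈ S.erase x, g ((S.erase x).erase y)
        = ((m:ℝ)+1)*((m:ℝ)+2) * Sk j := by
      have k1 := keyA (U := U) (j+1) (fun A => ∑ y ∈ A, g (A.erase y))
      have k2 := keyA (U := U) j g
      rw [k1, k2, hcardU] at *
      rw [hSk]
      have e1 : (j + m + 2 - (j+1)) = m + 1 := by omega
      have e2 : (j + m + 2 - j) = m + 2 := by omega
      rw [e1, e2]
      push_cast
      ring
    -- T3
    have T3 : ∑ S ∈ (univ : Finset U).powersetCard (j+2),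
        ∑ x ∈ S, ∑ y ∈ S.erase x, g (S.erase x)
        = ((j:ℝ)+1)*((m:ℝ)+1) * Sk (j+1) := by
      have : ∀ S ∈ (univ : Finset U).powersetCard (j+2),
          ∑ x ∈ S, ∑ y ∈ S.erase x, g (S.erase x)
          = ((j:ℝ)+1) * ∑ x ∈ S, g (S.erase x) := by
        intro S hS
        rw [Finset.mul_sum]
        refine Finset.sum_congr rfl (fun x hx => ?_)
        rw [Finset.sum_const, Finset.card_erase_of_mem hx, cardS S hS, nsmul_eq_mul]
        push_cast; ring
      rw [Finset.sum_congr rfl this, ← Finset.mul_sum,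
        keyA (U := U) (j+1) g, hcardU]
      have e1 : (j + m + 2 - (j+1)) = m + 1 := by omega
      rw [e1, hSk]
      push_cast
      ring
    -- T4
    have T4 : ∑ S ∈ (univ : Finset U).powersetCard (j+2),
        ∑ x ∈ S, ∑ y ∈ S.erase x, g (S.erase y)
        = ((j:ℝ)+1)*((m:ℝ)+1) * Sk (j+1) := by
      have : ∀ S ∈ (univ : Finset U).powersetCard (j+2),
          ∑ x ∈ S, ∑ y ∈ S.erase x, g (S.erase y)
          = ((j:ℝ)+1) * ∑ y ∈ S, g (S.erase y) := by
        intro S hS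
        rw [pairSum S (fun y => g (S.erase y)), cardS S hS]
        push_cast; ring
      rw [Finset.sum_congr rfl this, ← Finset.mul_sum,
        keyA (U := U) (j+1) g, hcardU]
      have e1 : (j + m + 2 - (j+1)) = m + 1 := by omega
      rw [e1, hSk]
      push_cast
      ring
    have lhs_eq : ∑ S ∈ (univ : Finset U).powersetCard (j+2),
          ∑ x ∈ S, ∑ y ∈ S.erase x, (g S + g ((S.erase x).erase y))
        = ((j:ℝ)+2)*((j:ℝ)+1) * Sk (j+2) + ((m:ℝ)+1)*((m:ℝ)+2) * Sk j := by
      simp only [Finset.sum_add_distrib]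
      rw [T1, T2]
    have rhs_eq : ∑ S ∈ (univ : Finset U).powersetCard (j+2),
          ∑ x ∈ S, ∑ y ∈ S.erase x, (g (S.erase x) + g (S.erase y))
        = 2*(((j:ℝ)+1)*((m:ℝ)+1)) * Sk (j+1) := by
      simp only [Finset.sum_add_distrib]
      rw [T3, T4]
      ring
    rw [lhs_eq, rhs_eq] at step
    linarith
  -- now convert to averages
  have hij2 : j + 2 - 2 = j := by omega
  have hij1 : j + 2 - 1 = j + 1 := by omega
  rw [hij2, hij1, hgavg, hgavg, hgavg]
  have hc0 : (0:ℝ) < (n.choose j : ℝ) := by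
    exact_mod_cast Nat.choose_pos (by omega)
  have hc1 : (0:ℝ) < (n.choose (j+1) : ℝ) := by
    exact_mod_cast Nat.choose_pos (by omega)
  have hc2 : (0:ℝ) < (n.choose (j+2) : ℝ) := by
    exact_mod_cast Nat.choose_pos (by omega)
  have id2 : ((j:ℝ)+2) * (n.choose (j+2) : ℝ) = ((m:ℝ)+1) * (n.choose (j+1) : ℝ) := by
    have := Nat.choose_succ_right_eq n (j+1)
    have e : n - (j+1) = m + 1 := by omega
    rw [e] at this
    have h' := congrArg (Nat.cast : ℕ → ℝ) this
    push_cast at h'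
    linarith
  have id1 : ((j:ℝ)+1) * (n.choose (j+1) : ℝ) = ((m:ℝ)+2) * (n.choose j : ℝ) := by
    have := Nat.choose_succ_right_eq n j
    have e : n - j = m + 2 := by omega
    rw [e] at this
    have h' := congrArg (Nat.cast : ℕ → ℝ) this
    push_cast at h'
    linarith
  set c0 := (n.choose j : ℝ)
  set c1 := (n.choose (j+1) : ℝ)
  set c2 := (n.choose (j+2) : ℝ)
  set D := (((j:ℝ)+1)*((m:ℝ)+1)) * c1 with hD
  have hDpos : 0 < D := by positivity
  have e2 : (1 / c2) * Sk (j+2) = (((j:ℝ)+2)*((j:ℝ)+1) * Sk (j+2)) / D := by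
    rw [one_div, inv_mul_eq_div, div_eq_div_iff hc2.ne' hDpos.ne', hD]
    linear_combination (-((j:ℝ)+1) * Sk (j+2)) * id2
  have e0 : (1 / c0) * Sk j = (((m:ℝ)+2)*((m:ℝ)+1) * Sk j) / D := by
    rw [one_div, inv_mul_eq_div, div_eq_div_iff hc0.ne' hDpos.ne', hD]
    linear_combination (((m:ℝ)+1) * Sk j) * id1
  have e1 : (1 / c1) * Sk (j+1) = ((((j:ℝ)+1)*((m:ℝ)+1)) * Sk (j+1)) / D := by
    rw [one_div, inv_mul_eq_div, div_eq_div_iff hc1.ne' hDpos.ne', hD]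
    ring
  rw [e2, e0, e1, ← add_div, ← mul_div_assoc]
  exact (div_le_div_iff_of_pos_right hDpos).mpr (by linarith)
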